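/- Let G be a countable torsion-free locally virtually abelian group, and let N be an abelian normal subgroup of G such that G/N is isomorphic to ℤ^∞. Then G has a subgroup isomorphic to ℤ^∞. -/

import Mathlib

/-- A group is *virtually abelian* if it has an abelian subgroup of finite index. -/
def VirtuallyAbelian (G : Type*) [Group G] : Prop :=
  ∃ A : Subgroup G, IsMulCommutative A ∧ A.FiniteIndex

/-- `ℤ^∞`, a free abelian group of countably infinite rank (written multiplicatively). -/
abbrev ZInf : Type := Multiplicative (ℕ →₀ ℤ)

/-- A group is *locally virtually abelian* if every finitely generated subgroup is
virtually abelian. -/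
def LocallyVirtuallyAbelian (G : Type*) [Group G] : Prop :=
  ∀ H : Subgroup G, Group.FG H → VirtuallyAbelian H

open scoped IsMulCommutative

section Aux

variable {G : Type*} [Group G]

/-- In a torsion-free group, `u ^ n = 1` with `n ≠ 0` forces `u = 1`. -/
lemma tf_pow_eq_one (htf : ∀ g : G, g ≠ 1 → ¬IsOfFinOrder g) {u : G} {n : ℕ} (hn : n ≠ 0)
    (h : u ^ n = 1) : u = 1 := by
  by_contra h1
  exact htf u h1 (isOfFinOrder_iff_pow_eq_one.mpr ⟨n, Nat.pos_of_ne_zero hn, h⟩)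

/-- In a torsion-free group, `u ^ s = 1` with `s : ℤ`, `s ≠ 0` forces `u = 1`. -/
lemma tf_zpow_eq_one (htf : ∀ g : G, g ≠ 1 → ¬IsOfFinOrder g) {u : G} {s : ℤ} (hs : s ≠ 0)
    (h : u ^ s = 1) : u = 1 := by
  apply tf_pow_eq_one htf (Int.natAbs_ne_zero.mpr hs)
  rcases Int.natAbs_eq s with h' | h'
  · rw [← zpow_natCast, ← h', h]
  · have h2 : u ^ (-(s.natAbs : ℤ)) = 1 := by rw [← h', h]
    rw [zpow_neg, inv_eq_one, zpow_natCast] at h2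
    exact h2

/-- If the commutator of `x` and `y` commutes with both `x` and `y`, and some positive
powers of `x` and `y` commute, then (in a torsion-free group) `x` and `y` commute. -/
lemma commute_of_pow_commute (htf : ∀ g : G, g ≠ 1 → ¬IsOfFinOrder g) {x y : G} {n : ℕ} (hn : n ≠ 0)
    (hzx : Commute (x * y * x⁻¹ * y⁻¹) x) (hzy : Commute (x * y * x⁻¹ * y⁻¹) y)
    (h : Commute (x ^ n) (y ^ n)) : Commute x y := by
  set z := x * y * x⁻¹ * y⁻¹ with hz
  have key0 : x * y = z * (y * x) := by rw [hz]; group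
  have key1 : ∀ k : ℕ, x ^ k * y = z ^ k * (y * x ^ k) := by
    intro k
    induction k with
    | zero => simp
    | succ k ih =>
      calc x ^ (k + 1) * y = x * (x ^ k * y) := by rw [pow_succ']; rw [mul_assoc]
        _ = x * (z ^ k * (y * x ^ k)) := by rw [ih]
        _ = (x * z ^ k) * (y * x ^ k) := by rw [mul_assoc]
        _ = (z ^ k * x) * (y * x ^ k) := by rw [((hzx.pow_left k).symm).eq]
        _ = z ^ k * ((x * y) * x ^ k) := by group
        _ = z ^ k * ((z * (y * x)) * x ^ k) := by rw [key0]
        _ = z ^ (k + 1) * (y * x ^ (k + 1)) := by rw [pow_succ z, pow_succ x]; group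
  have key2 : ∀ l : ℕ, x ^ n * y ^ l = z ^ (n * l) * (y ^ l * x ^ n) := by
    intro l
    induction l with
    | zero => simp
    | succ l ih =>
      calc x ^ n * y ^ (l + 1) = (x ^ n * y ^ l) * y := by rw [pow_succ, ← mul_assoc]
        _ = (z ^ (n * l) * (y ^ l * x ^ n)) * y := by rw [ih]
        _ = z ^ (n * l) * (y ^ l * (x ^ n * y)) := by group
        _ = z ^ (n * l) * (y ^ l * (z ^ n * (y * x ^ n))) := by rw [key1 n]
        _ = z ^ (n * l) * ((y ^ l * z ^ n) * (y * x ^ n)) := by group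
        _ = z ^ (n * l) * ((z ^ n * y ^ l) * (y * x ^ n)) := by
            rw [((hzy.pow_pow n l).symm).eq]
        _ = z ^ (n * (l + 1)) * (y ^ (l + 1) * x ^ n) := by
            rw [Nat.mul_succ, pow_add, pow_succ y]; group
  have h3 : y ^ n * x ^ n = z ^ (n * n) * (y ^ n * x ^ n) := (h.symm.eq).trans (key2 n)
  have h4 : z ^ (n * n) = 1 := right_eq_mul.mp h3
  have h5 : z = 1 := tf_pow_eq_one htf (Nat.mul_ne_zero hn hn) h4
  have h6 : x * y * x⁻¹ = y := mul_inv_eq_one.mp h5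
  exact (commute_iff_eq _ _).mpr (mul_inv_eq_iff_eq_mul.mp h6)

/-- In a locally virtually abelian group, any two elements have commuting positive powers. -/
lemma exists_pow_commute (hlva : LocallyVirtuallyAbelian G) (x y : G) :
    ∃ n : ℕ, 0 < n ∧ Commute (x ^ n) (y ^ n) := by
  classical
  set H := Subgroup.closure ({x, y} : Set G) with hH
  have hxH : x ∈ H := Subgroup.subset_closure (by simp)
  have hyH : y ∈ H := Subgroup.subset_closure (by simp)
  have hFG : Group.FG H := by
    rw [Group.fg_iff_subgroup_fg]
    exact ⟨({x, y} : Finset G), by simp [hH]⟩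
  obtain ⟨A, hA, hAfi⟩ := hlva H hFG
  haveI := hA
  haveI := hAfi
  set K := A.normalCore with hK
  haveI : K.FiniteIndex := Subgroup.finiteIndex_normalCore A
  refine ⟨K.index, Nat.pos_of_ne_zero Subgroup.FiniteIndex.index_ne_zero, ?_⟩
  set x' : H := ⟨x, hxH⟩
  set y' : H := ⟨y, hyH⟩
  have hx' : x' ^ K.index ∈ A := A.normalCore_le (K.pow_index_mem x')
  have hy' : y' ^ K.index ∈ A := A.normalCore_le (K.pow_index_mem y')
  have hcomm : (x' ^ K.index) * (y' ^ K.index) = (y' ^ K.index) * (x' ^ K.index) :=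
    Subgroup.mul_comm_of_mem_isMulCommutative (H := A) hx' hy'
  have hG := congrArg (fun g : H => (g : G)) hcomm
  exact (commute_iff_eq _ _).mpr (by simpa using hG)

/-- Simultaneous version for a finite family. -/
lemma exists_pow_commute_family (hlva : LocallyVirtuallyAbelian G) {r : ℕ} (x : G)
    (v : Fin r → G) : ∃ L : ℕ, 0 < L ∧ ∀ i, Commute (x ^ L) (v i ^ L) := by
  choose n hn hcomm using fun i => exists_pow_commute hlva x (v i)
  refine ⟨∏ i, n i, Finset.prod_pos (fun i _ => hn i), fun i => ?_⟩
  have h1 : (∏ j, n j) = n i * ∏ j ∈ Finset.univ.erase i, n j :=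
    (Finset.mul_prod_erase _ _ (Finset.mem_univ i)).symm
  rw [h1, pow_mul, pow_mul]
  exact (hcomm i).pow_pow _ _

/-- If a commutative subgroup contains a `ℤ`-independent sequence, then `G` has a subgroup
isomorphic to `ℤ^∞`. -/
lemma exists_zinf_subgroup (A : Subgroup G) [hA : IsMulCommutative A] (b : ℕ → A)
    (hind : ∀ c : ℕ →₀ ℤ, (c.prod fun i k => b i ^ k) = 1 → c = 0) :
    ∃ H : Subgroup G, Nonempty (H ≃* ZInf) := by
  let ψ : ZInf →* A :=
    { toFun := fun c => (Multiplicative.toAdd c).prod fun i k => b i ^ k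
      map_one' := Finsupp.prod_zero_index
      map_mul' := fun c d =>
        Finsupp.prod_add_index' (fun i => zpow_zero _) (fun i k l => zpow_add _ _ _) }
  have hinj : Function.Injective (A.subtype.comp ψ) := by
    rw [injective_iff_map_eq_one]
    intro c hc
    have h1 : ψ c = 1 := by
      apply Subtype.ext
      simpa using hc
    have h2 := hind (Multiplicative.toAdd c) h1
    have : Multiplicative.toAdd c = Multiplicative.toAdd (1 : ZInf) := by
      rw [h2, toAdd_one]
    exact Multiplicative.toAdd.injective this
  exact ⟨(A.subtype.comp ψ).range, ⟨(MonoidHom.ofInjective hinj).symm⟩⟩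

end Aux

/-- **Lemma.** Let `G` be a countable torsion-free locally virtually abelian group, and let `N`
be an abelian normal subgroup of `G` such that `G/N ≅ ℤ^∞`. Then `G` has a subgroup isomorphic
to `ℤ^∞`. -/
theorem zinf_subgroup_of_torsionFree (G : Type) [Group G] [Countable G]
    (htf : ∀ g : G, g ≠ 1 → ¬IsOfFinOrder g) (hlva : LocallyVirtuallyAbelian G)
    (N : Subgroup G) [N.Normal] (hNab : IsMulCommutative N)
    (hq : Nonempty ((G ⧸ N) ≃* ZInf)) :
    ∃ H : Subgroup G, Nonempty (H ≃* ZInf) := by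
  classical
  obtain ⟨φ⟩ := hq
  haveI := hNab
  set π : G →* ZInf := φ.toMonoidHom.comp (QuotientGroup.mk' N) with hπ
  have hker : ∀ g : G, π g = 1 ↔ g ∈ N := by
    intro g
    constructor
    · intro h
      have h1 : QuotientGroup.mk' N g = 1 := by
        apply φ.injective
        simpa [hπ] using h
      rw [← QuotientGroup.ker_mk' N]
      exact h1
    · intro h
      have h1 : QuotientGroup.mk' N g = 1 := by
        rw [← MonoidHom.mem_ker, QuotientGroup.ker_mk' N]; exact h
      simp [hπ, MonoidHom.comp_apply, h1]
  have hsurj : Function.Surjective π := by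
    rw [hπ, MonoidHom.coe_comp]
    exact φ.surjective.comp (QuotientGroup.mk'_surjective N)
  -- commutators land in N
  have hcommN : ∀ x y : G, x * y * x⁻¹ * y⁻¹ ∈ N := by
    intro x y
    rw [← hker]
    have : π x * π y * (π x)⁻¹ * (π y)⁻¹ = 1 := by
      rw [mul_comm (π x) (π y)]; group
    simpa [map_mul, map_inv] using this
  -- the centralizer of N is abelian
  set C := Subgroup.centralizer (N : Set G) with hC
  have hCel : ∀ x : G, x ∈ C → ∀ z : G, z ∈ N → Commute z x := by
    intro x hx z hz
    exact (commute_iff_eq _ _).mpr (Subgroup.mem_centralizer_iff.mp hx z hz)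
  haveI hCcomm : IsMulCommutative C := by
    constructor
    constructor
    intro a b
    apply Subtype.ext
    show (a : G) * b = b * a
    obtain ⟨n, hn, hcom⟩ := exists_pow_commute hlva (a : G) (b : G)
    have hzN := hcommN (a : G) (b : G)
    have hza : Commute ((a : G) * b * (a : G)⁻¹ * (b : G)⁻¹) (a : G) := hCel a a.2 _ hzN
    have hzb : Commute ((a : G) * b * (a : G)⁻¹ * (b : G)⁻¹) (b : G) := hCel b b.2 _ hzN
    exact (commute_of_pow_commute htf hn.ne' hza hzb hcom).eq
  -- independence predicate for finite families in N
  let Indep : ∀ {s : ℕ}, (Fin s → N) → Prop := fun {s} a =>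
    ∀ c : Fin s → ℤ, (∏ i, a i ^ c i) = 1 → ∀ i, c i = 0
  by_cases hext : ∀ (s : ℕ) (a : Fin s → N), Indep a → ∃ b : N, Indep (Fin.snoc a b)
  · -- N contains an infinite independent family; it yields ℤ^∞
    let X : ℕ → Type := fun s => { a : Fin s → N // Indep a }
    have base : X 0 := ⟨fun i => i.elim0, fun c _ i => i.elim0⟩
    let step : ∀ s, X s → X (s + 1) := fun s a =>
      ⟨Fin.snoc a.1 (Classical.choose (hext s a.1 a.2)),
        Classical.choose_spec (hext s a.1 a.2)⟩
    let fam : ∀ s, X s := fun s => Nat.rec base step s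
    have hcompat : ∀ (s : ℕ) (i : Fin s), (fam (s + 1)).1 i.castSucc = (fam s).1 i := by
      intro s i
      have h9 : fam (s + 1) = step s (fam s) := rfl
      rw [h9]
      have h10 : (step s (fam s)).1
          = Fin.snoc (fam s).1 (Classical.choose (hext s (fam s).1 (fam s).2)) := rfl
      rw [h10]
      exact Fin.snoc_castSucc _ _ i
    let b : ℕ → N := fun i => (fam (i + 1)).1 (Fin.last i)
    have hb : ∀ (s : ℕ) (i : Fin s), (fam s).1 i = b i := by
      intro s
      induction s with
      | zero => exact fun i => i.elim0
      | succ s ih =>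
        intro i
        refine Fin.lastCases ?_ ?_ i
        · rfl
        · intro j
          rw [hcompat s j, ih j]
          rfl
    apply exists_zinf_subgroup N b
    intro c hc
    set s := c.support.sup (fun i => i + 1) with hs
    have hbound : ∀ i ∈ c.support, i < s := fun i hi =>
      Nat.lt_of_lt_of_le (Nat.lt_succ_self i) (Finset.le_sup (f := fun i => i + 1) hi)
    have h1 : c.prod (fun i k => b i ^ k) = ∏ i ∈ Finset.range s, b i ^ c i :=
      Finsupp.prod_of_support_subset c
        (fun i hi => Finset.mem_range.mpr (hbound i hi)) _ (fun i _ => zpow_zero _)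
    have h2 : (∏ i ∈ Finset.range s, b i ^ c i) = ∏ i : Fin s, b i ^ c i :=
      (Fin.prod_univ_eq_prod_range (fun i => b i ^ c i) s).symm
    have h3 : (∏ i : Fin s, (fam s).1 i ^ c i) = 1 := by
      rw [Finset.prod_congr rfl (fun i _ => by rw [hb s i])]
      rw [← h2, ← h1]
      exact hc
    have h4 := (fam s).2 (fun i : Fin s => c i) h3
    ext j
    by_cases hj : j ∈ c.support
    · exact h4 ⟨j, hbound j hj⟩
    · exact Finsupp.notMem_support_iff.mp hj
  · -- N has finite rank: some maximal independent family exists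
    push_neg at hext
    obtain ⟨r, a, ha, hmax⟩ := hext
    -- every element of N has a nonzero power in the span of the family
    have hpow : ∀ x : N, ∃ m : ℤ, m ≠ 0 ∧ ∃ d : Fin r → ℤ, x ^ m = ∏ i, a i ^ d i := by
      intro x
      have h := hmax x
      simp only [Indep, not_forall] at h
      obtain ⟨c, hc1, hc2⟩ := h
      obtain ⟨i0, hi0⟩ := hc2
      have hsplit : (∏ i : Fin (r + 1), Fin.snoc a x i ^ c i) =
          (∏ i : Fin r, a i ^ c i.castSucc) * x ^ c (Fin.last r) := by
        rw [Fin.prod_univ_castSucc]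
        congr 1
        · exact Finset.prod_congr rfl fun i _ => by rw [Fin.snoc_castSucc]
        · rw [Fin.snoc_last]
      by_cases hlast : c (Fin.last r) = 0
      · exfalso
        have h5 : (∏ i : Fin r, a i ^ c i.castSucc) = 1 := by
          have h6 := hc1
          rw [hsplit, hlast, zpow_zero, mul_one] at h6
          exact h6
        have hz := ha (fun i => c i.castSucc) h5
        exact hi0 (Fin.lastCases (motive := fun i => c i = 0) hlast hz i0)
      · refine ⟨c (Fin.last r), hlast, fun i => -(c i.castSucc), ?_⟩
        have h5 : (∏ i : Fin r, a i ^ c i.castSucc) * x ^ c (Fin.last r) = 1 := by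
          rw [← hsplit]; exact hc1
        have h6 : x ^ c (Fin.last r) = (∏ i : Fin r, a i ^ c i.castSucc)⁻¹ :=
          eq_inv_of_mul_eq_one_left (by rw [mul_comm] at h5; exact h5)
        rw [h6, ← Finset.prod_inv_distrib]
        exact Finset.prod_congr rfl fun i _ => (zpow_neg _ _).symm
    -- every element of G has a positive power centralizing N
    have hcent : ∀ g : G, ∃ L : ℕ, 0 < L ∧ g ^ L ∈ C := by
      intro g
      obtain ⟨L, hL, hcom⟩ := exists_pow_commute_family hlva g (fun i => (a i : G))
      refine ⟨L, hL, ?_⟩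
      rw [hC, Subgroup.mem_centralizer_iff]
      intro x hx
      set h := g ^ L with hh
      obtain ⟨m, hm, d, hd⟩ := hpow ⟨x, hx⟩
      set Z := Subgroup.centralizer ({h} : Set G) with hZ
      set Z' := Z.comap N.subtype with hZ'
      have hZi : ∀ i : Fin r, (a i) ^ L ∈ Z' := by
        intro i
        rw [hZ', Subgroup.mem_comap]
        rw [hZ, Subgroup.mem_centralizer_iff]
        intro w hw
        rw [Set.mem_singleton_iff] at hw
        subst hw
        have : (N.subtype ((a i) ^ L) : G) = (a i : G) ^ L := by
          simp
        rw [this]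
        exact (hcom i).eq
      set s : ℤ := m * (L : ℤ) with hsdef
      have hs : s ≠ 0 := mul_ne_zero hm (Int.natCast_ne_zero.mpr hL.ne')
      have key : (⟨x, hx⟩ : N) ^ s ∈ Z' := by
        have e1 : (⟨x, hx⟩ : N) ^ s = ∏ i, ((a i) ^ L) ^ (d i) := by
          rw [hsdef, zpow_mul, hd, zpow_natCast, ← Finset.prod_pow]
          refine Finset.prod_congr rfl fun i _ => ?_
          rw [← zpow_natCast (a i ^ d i) L, ← zpow_mul, mul_comm, zpow_mul, zpow_natCast]
        rw [e1]
        exact Subgroup.prod_mem _ fun i _ => Subgroup.zpow_mem _ (hZi i) _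
      have key2 : x ^ s ∈ Z := by
        rw [hZ', Subgroup.mem_comap] at key
        have : (N.subtype ((⟨x, hx⟩ : N) ^ s) : G) = x ^ s := by
          simp
        rwa [this] at key
      have hcomm2 : h * x ^ s = x ^ s * h :=
        Subgroup.mem_centralizer_iff.mp key2 h (Set.mem_singleton h)
      set y := h * x * h⁻¹ with hy
      have hyN : y ∈ N := Subgroup.Normal.conj_mem inferInstance x hx h
      have hys : y ^ s = x ^ s := by
        rw [hy, conj_zpow, hcomm2, mul_assoc, mul_inv_cancel, mul_one]
      -- conclude y = x by torsion-freeness within N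
      have hYX : (⟨y, hyN⟩ : N) ^ s = (⟨x, hx⟩ : N) ^ s := by
        apply Subtype.coe_injective
        simpa [SubgroupClass.coe_zpow] using hys
      have hdiv : (((⟨y, hyN⟩ : N) / ⟨x, hx⟩) : N) ^ s = 1 := by
        rw [div_zpow, hYX, div_self']
      have hdivG : (((((⟨y, hyN⟩ : N) / ⟨x, hx⟩) : N)) : G) = 1 := by
        apply tf_zpow_eq_one htf hs
        rw [← SubgroupClass.coe_zpow, hdiv]
        rfl
      have hyx : y = x := by
        have : ((⟨y, hyN⟩ : N) / ⟨x, hx⟩) = 1 := Subtype.coe_injective (by simpa using hdivG)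
        have h7 := div_eq_one.mp this
        exact Subtype.ext_iff.mp h7
      have h8 : h * x * h⁻¹ = x := by rw [← hy, hyx]
      rw [← mul_inv_eq_iff_eq_mul.mp h8]
    -- lifts of the standard basis, raised to suitable powers, give ℤ^∞ inside C
    choose gg hgg using hsurj
    set e : ℕ → ZInf := fun i => Multiplicative.ofAdd (Finsupp.single i 1) with he
    choose L hL hmem using fun i => hcent (gg (e i))
    set b' : ℕ → C := fun i => ⟨gg (e i) ^ L i, hmem i⟩ with hb'
    apply exists_zinf_subgroup C b'
    intro c hc
    set p : C →* ZInf := π.comp C.subtype with hp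
    have h0 : p (c.prod fun i k => b' i ^ k) = 1 := by rw [hc, map_one]
    rw [map_finsuppProd] at h0
    have hterm : ∀ (i : ℕ) (k : ℤ),
        p (b' i ^ k) = Multiplicative.ofAdd (Finsupp.single i (k * (L i : ℤ))) := by
      intro i k
      have h1 : p (b' i ^ k) = (e i ^ L i) ^ k := by
        rw [map_zpow]
        congr 1
        show π ((C.subtype) (b' i)) = e i ^ L i
        have : (C.subtype) (b' i) = gg (e i) ^ L i := rfl
        rw [this, map_pow, hgg]
      rw [h1]
      apply Multiplicative.toAdd.injective
      rw [toAdd_zpow, toAdd_pow, toAdd_ofAdd]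
      simp [he, Finsupp.smul_single, smul_eq_mul, nsmul_eq_mul]
    have h2 : (c.prod fun i k => Multiplicative.ofAdd (Finsupp.single i (k * (L i : ℤ)))) =
        1 := by
      rw [← h0]
      exact (Finsupp.prod_congr fun i _ => (hterm i (c i)).symm)
    have h3 : (∑ i ∈ c.support, Finsupp.single i (c i * (L i : ℤ))) = 0 := by
      have h4 := congrArg Multiplicative.toAdd h2
      rw [Finsupp.prod, toAdd_prod, toAdd_one] at h4
      simpa using h4
    ext j
    by_cases hj : j ∈ c.support
    · have h5 := congrArg (fun f : ℕ →₀ ℤ => f j) h3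
      simp only [Finsupp.finset_sum_apply, Finsupp.single_apply, Finsupp.coe_zero,
        Pi.zero_apply] at h5
      rw [Finset.sum_ite_eq' c.support j (fun i => c i * (L i : ℤ))] at h5
      rw [if_pos hj] at h5
      have h6 : c j = 0 ∨ (L j : ℤ) = 0 := mul_eq_zero.mp h5
      rcases h6 with h6 | h6
      · exact h6
      · exact absurd h6 (Int.natCast_ne_zero.mpr (hL j).ne')
    · exact Finsupp.notMem_support_iff.mp hj
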